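/- Let a, b be integers with a > 0. Then the equation x² − a·y² − b·z² = 1 admits at least one solution (x, y, z) ∈ ℤ³ with x·z ≠ 0. -/
import Mathlib

lemma sq_between {n c : ℤ} (hn : 0 ≤ n) (h1 : n ^ 2 < c) (h2 : c < (n + 1) ^ 2) :
    ¬IsSquare c := by
  rintro ⟨k, rfl⟩
  rw [← pow_two] at h1 h2
  rcases le_or_gt 0 k with hk | hk
  · have : n < k := by nlinarith
    nlinarith
  · have : n < -k := by nlinarith
    nlinarith

lemma pell_large (a : ℤ) (ha : 0 < a) (hna : ¬IsSquare a) (n : ℕ) :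
    ∃ p q : ℤ, p ^ 2 - a * q ^ 2 = 1 ∧ q ≠ 0 ∧ (n : ℤ) + 2 ≤ p ^ 2 := by
  induction n with
  | zero =>
    obtain ⟨p, q, h, hq⟩ := Pell.exists_of_not_isSquare ha hna
    refine ⟨p, q, h, hq, ?_⟩
    have hq2 : 1 ≤ q ^ 2 := by
      have h0 : 0 < q ^ 2 := (sq_nonneg q).lt_of_ne (Ne.symm (pow_ne_zero 2 hq))
      linarith
    have : 1 * 1 ≤ a * q ^ 2 := mul_le_mul (by linarith) hq2 (by norm_num) (by linarith)
    push_cast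
    linarith
  | succ n ih =>
    obtain ⟨p, q, h, hq, hp⟩ := ih
    have h2 : (2 : ℤ) ≤ p ^ 2 := by
      have : (0 : ℤ) ≤ (n : ℤ) := Int.natCast_nonneg n
      linarith
    refine ⟨2 * p ^ 2 - 1, 2 * p * q, by nlinarith, ?_, ?_⟩
    · have hp0 : p ≠ 0 := by intro h0; rw [h0] at h2; norm_num at h2
      exact mul_ne_zero (mul_ne_zero two_ne_zero hp0) hq
    · have key : p ^ 2 + 1 ≤ (2 * p ^ 2 - 1) ^ 2 := by nlinarith
      push_cast
      linarith

lemma key (a b : ℤ) (ha : 0 < a) (hb : b ≠ 0) :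
    ∃ m c : ℤ, a * m ^ 2 + b = c ∧ 0 < c ∧ ¬IsSquare c := by
  have hb1 : 1 ≤ |b| := Int.one_le_abs hb
  by_cases hsq : IsSquare a
  · obtain ⟨s, rfl⟩ := hsq
    have hs : s ≠ 0 := by rintro rfl; norm_num at ha
    set t := |s| with htdef
    have ht1 : 1 ≤ t := Int.one_le_abs hs
    have hts : s * s = t ^ 2 := by rw [pow_two, htdef, abs_mul_abs_self]
    set m : ℤ := |b| + 1 with hm
    set n0 : ℤ := t * m with hn0
    have hn01 : 1 ≤ n0 := by nlinarith
    refine ⟨m, s * s * m ^ 2 + b, rfl, ?_, ?_⟩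
    · rcases le_or_gt 0 b with hbp | hbn
      · nlinarith
      · have hbb : -|b| = b := by simp [abs_of_neg hbn]
        nlinarith
    · rcases le_or_gt 0 b with hbp | hbn
      · have hbb : b = |b| := (abs_of_nonneg hbp).symm
        refine sq_between (n := n0) (by linarith) ?_ ?_
        · rw [hts, hn0]; nlinarith
        · rw [hts, hn0]; nlinarith
      · have hbb : b = -|b| := by simp [abs_of_neg hbn]
        refine sq_between (n := n0 - 1) (by linarith) ?_ ?_
        · rw [hts, hn0]; nlinarith
        · rw [hts, hn0]; ring_nf; nlinarith
  · obtain ⟨p, q, h, hq, hp⟩ := pell_large a ha hsq b.natAbs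
    have hp2 : |b| + 2 ≤ p ^ 2 := by rw [Int.abs_eq_natAbs]; exact hp
    have haq : a * q ^ 2 = p ^ 2 - 1 := by linarith
    have hexp : a * (p * q) ^ 2 = (p ^ 2 - 1) * p ^ 2 := by
      have : a * (p * q) ^ 2 = (a * q ^ 2) * p ^ 2 := by ring
      rw [this, haq]
    have hbu : b ≤ |b| := le_abs_self b
    have hbl : -|b| ≤ b := neg_abs_le b
    refine ⟨p * q, a * (p * q) ^ 2 + b, rfl, ?_, ?_⟩
    · rw [hexp]; nlinarith
    · refine sq_between (n := p ^ 2 - 1) (by nlinarith) ?_ ?_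
      · rw [hexp]; nlinarith
      · rw [hexp]; nlinarith

theorem stmt5 (a b : ℤ) (ha : 0 < a) :
    ∃ x y z : ℤ, x ^ 2 - a * y ^ 2 - b * z ^ 2 = 1 ∧ x * z ≠ 0 := by
  by_cases hb : b = 0
  · exact ⟨1, 0, 1, by simp [hb], by norm_num⟩
  obtain ⟨m, c, hc, hcpos, hcns⟩ := key a b ha hb
  obtain ⟨X, W, hXW, hW⟩ := Pell.exists_of_not_isSquare hcpos hcns
  refine ⟨X, m * W, W, ?_, ?_⟩
  · have : X ^ 2 - (a * m ^ 2 + b) * W ^ 2 = 1 := by rw [hc]; exact hXW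
    linear_combination this
  · have hW2 : 1 ≤ W ^ 2 := by
      have h0 : 0 < W ^ 2 := (sq_nonneg W).lt_of_ne (Ne.symm (pow_ne_zero 2 hW))
      linarith
    have hX : X ≠ 0 := by
      intro h0; rw [h0] at hXW
      nlinarith
    exact mul_ne_zero hX hW
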